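/- (Theorem 1, matrix form.) Let Y be an invertible symmetric real M×M matrix and D a diagonal positive-definite M×M matrix, and let Σ = Y⁻¹ D Y⁻¹ be the covariance matrix of ΔV = Y⁻¹ ΔI where ΔI ~ N(0, D). Fix i ≠ j and suppose bus i and bus j are not connected and have no common neighbor, i.e., Y_{ij} = 0 and there is no index k ∉ {i,j} with both Y_{ik} ≠ 0 and Y_{jk} ≠ 0. Then the (i,j) entry of the precision matrix Σ⁻¹ = Y D⁻¹ Y is zero, and consequently, writing I = {i,j} and J = {1,…,M}\{i,j}, the off-diagonal entry of the conditional covariance matrix Σ_{I|J} = Σ_{II} − Σ_{IJ} Σ_{JJ}⁻¹ Σ_{IJ}ᵀ is zero. -/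

import Mathlib

open Matrix

section Aux

lemma auxIsHermitian_of_isSymm {n : Type*} {A : Matrix n n ℝ} (h : A.IsSymm) :
    A.IsHermitian := by
  rw [Matrix.IsHermitian, Matrix.conjTranspose_eq_transpose_of_trivial]; exact h

lemma auxPosDef_submatrix {n m : Type*} [Fintype n] [Fintype m] [DecidableEq n] [DecidableEq m]
    {S : Matrix n n ℝ} (hS : S.PosDef) (f : m → n) (hf : Function.Injective f) :
    (S.submatrix f f).PosDef := by
  refine Matrix.PosDef.of_dotProduct_mulVec_pos (hS.1.submatrix f) (fun x hx => ?_)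
  set B : Matrix n m ℝ := (1 : Matrix n n ℝ).submatrix id f with hB
  have hkey : S.submatrix f f = Bᴴ * S * B := by
    conv_lhs => rw [(by simp : S = 1 * S * 1)]
    rw [Matrix.submatrix_mul (he₂ := Function.bijective_id),
      Matrix.submatrix_mul (he₂ := Function.bijective_id), Matrix.submatrix_id_id]
    simp only [hB, Matrix.conjTranspose_submatrix, Matrix.conjTranspose_one]
  have hBx : B *ᵥ x ≠ 0 := by
    obtain ⟨a, ha⟩ := Function.ne_iff.mp hx
    intro h0
    apply ha
    have h1 : (B *ᵥ x) (f a) = x a := by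
      simp only [hB, Matrix.mulVec, dotProduct, Matrix.submatrix_apply, id,
        Matrix.one_apply, hf.eq_iff, ite_mul, one_mul, zero_mul]
      simp
    rw [h0] at h1
    exact h1.symm
  rw [hkey]
  simpa only [Matrix.star_mulVec, Matrix.dotProduct_mulVec, Matrix.vecMul_vecMul] using
    hS.dotProduct_mulVec_pos hBx

/-- The splitting of indices into `{i,j}` and the rest. -/
def auxSplitEquiv {M : ℕ} (i j : Fin M) (hij : i ≠ j) :
    (Fin 2 ⊕ {k : Fin M // k ≠ i ∧ k ≠ j}) ≃ Fin M where
  toFun := Sum.elim ![i, j] Subtype.val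
  invFun k :=
    if h1 : k = i then Sum.inl 0
    else if h2 : k = j then Sum.inl 1 else Sum.inr ⟨k, h1, h2⟩
  left_inv := by
    rintro (a | ⟨k, hk1, hk2⟩)
    · fin_cases a <;> simp [hij, hij.symm]
    · simp [hk1, hk2]
  right_inv := by
    intro k
    by_cases h1 : k = i
    · simp [h1]
    · by_cases h2 : k = j <;> simp [h1, h2, hij.symm]

lemma auxInvOf_inv {n : Type*} [Fintype n] [DecidableEq n] (A : Matrix n n ℝ) [Invertible A] :
    (⅟A)⁻¹ = A := by
  rw [Matrix.invOf_eq_nonsing_inv,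
    Matrix.nonsing_inv_nonsing_inv _ (Matrix.isUnit_det_of_invertible _)]

end Aux

/-- **Theorem 1, matrix form.** Let `Y` be an invertible symmetric real
`M × M` matrix, `D` a diagonal positive-definite matrix, and `Σ' = Y⁻¹ D Y⁻¹` the
covariance of `ΔV = Y⁻¹ ΔI` with `ΔI ~ N(0, D)`.  If `i ≠ j`, bus `i` and bus `j` are
not connected (`Y i j = 0`) and have no common neighbor, then the `(i,j)` entry of the
precision matrix `Σ'⁻¹ = Y D⁻¹ Y` is zero, and the off-diagonal entry of the
conditional covariance (Schur complement) for `I = {i,j}`, `J = complement`, is zero. -/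
theorem line_outage_conditional_independence_matrix
    {M : ℕ} (Y D : Matrix (Fin M) (Fin M) ℝ)
    (hY : IsUnit Y.det) (hYsymm : Y.IsSymm)
    (hDdiag : D.IsDiag) (hDpos : D.PosDef)
    (i j : Fin M) (hij : i ≠ j) (hYij : Y i j = 0)
    (hnocommon : ∀ k : Fin M, k ≠ i → k ≠ j → ¬(Y i k ≠ 0 ∧ Y j k ≠ 0)) :
    let S : Matrix (Fin M) (Fin M) ℝ := Y⁻¹ * D * Y⁻¹
    let e : Fin 2 → Fin M := ![i, j]
    let SII : Matrix (Fin 2) (Fin 2) ℝ := of fun a b => S (e a) (e b)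
    let SIJ : Matrix (Fin 2) {k : Fin M // k ≠ i ∧ k ≠ j} ℝ := of fun a b => S (e a) b.val
    let SJJ : Matrix {k : Fin M // k ≠ i ∧ k ≠ j} {k : Fin M // k ≠ i ∧ k ≠ j} ℝ :=
      of fun a b => S a.val b.val
    S⁻¹ = Y * D⁻¹ * Y ∧ S⁻¹ i j = 0 ∧ (SII - SIJ * SJJ⁻¹ * SIJᵀ) 0 1 = 0 := by
  intro S e SII SIJ SJJ
  have hYinvsymm : Y⁻¹ᵀ = Y⁻¹ := by rw [Matrix.transpose_nonsing_inv, hYsymm]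
  have hDsymm : Dᵀ = D := hDdiag.isSymm
  -- Part 1
  have h1 : S⁻¹ = Y * D⁻¹ * Y := by
    show (Y⁻¹ * D * Y⁻¹)⁻¹ = Y * D⁻¹ * Y
    rw [Matrix.mul_inv_rev, Matrix.mul_inv_rev, Matrix.nonsing_inv_nonsing_inv _ hY,
      Matrix.mul_assoc]
  -- Part 2
  have hDinv : D⁻¹ = Matrix.diagonal (Ring.inverse D.diag) := by
    conv_lhs => rw [← hDdiag.diagonal_diag]
    rw [Matrix.inv_diagonal]
  have h2 : S⁻¹ i j = 0 := by
    rw [h1, hDinv, Matrix.mul_apply]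
    apply Finset.sum_eq_zero
    intro k _
    rw [Matrix.mul_diagonal]
    rcases eq_or_ne k i with rfl | hki
    · rw [hYij, mul_zero]
    rcases eq_or_ne k j with rfl | hkj
    · rw [hYij, zero_mul, zero_mul]
    rcases eq_or_ne (Y i k) 0 with h | h
    · rw [h, zero_mul, zero_mul]
    · have hjk : Y j k = 0 := by
        by_contra hc
        exact hnocommon k hki hkj ⟨h, hc⟩
      rw [hYsymm.apply k j] at hjk
      rw [hjk, mul_zero]
  -- symmetry of S
  have hSsymm : Sᵀ = S := by
    show (Y⁻¹ * D * Y⁻¹)ᵀ = Y⁻¹ * D * Y⁻¹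
    rw [Matrix.transpose_mul, Matrix.transpose_mul, hYinvsymm, hDsymm, ← Matrix.mul_assoc]
  have hSinvsymm : S⁻¹ᵀ = S⁻¹ := by rw [Matrix.transpose_nonsing_inv, hSsymm]
  have h2' : S⁻¹ j i = 0 := by
    have h := congrFun (congrFun hSinvsymm j) i
    rw [Matrix.transpose_apply] at h
    rw [← h, h2]
  -- positive definiteness of S
  have hYinvH : (Y⁻¹)ᴴ = Y⁻¹ := by
    rw [Matrix.conjTranspose_eq_transpose_of_trivial, hYinvsymm]
  have hSpos : S.PosDef := by
    refine Matrix.PosDef.of_dotProduct_mulVec_pos (auxIsHermitian_of_isSymm hSsymm) (fun x hx => ?_)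
    have hz : Y⁻¹ *ᵥ x ≠ 0 := by
      intro h0
      apply hx
      have h := congrArg (Y *ᵥ ·) h0
      simpa [Matrix.mulVec_mulVec, Matrix.mul_nonsing_inv _ hY] using h
    have heq : star (Y⁻¹ *ᵥ x) ⬝ᵥ D *ᵥ (Y⁻¹ *ᵥ x) = star x ⬝ᵥ S *ᵥ x := by
      show _ = star x ⬝ᵥ (Y⁻¹ * D * Y⁻¹) *ᵥ x
      rw [Matrix.star_mulVec, hYinvH, Matrix.dotProduct_mulVec, Matrix.vecMul_vecMul,
        Matrix.dotProduct_mulVec, Matrix.vecMul_vecMul, ← Matrix.dotProduct_mulVec]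
    exact heq ▸ hDpos.dotProduct_mulVec_pos hz
  haveI hSinv : Invertible S := hSpos.isUnit.invertible
  have hSJJpos : SJJ.PosDef := auxPosDef_submatrix hSpos Subtype.val Subtype.val_injective
  haveI hSJJinv : Invertible SJJ := hSJJpos.isUnit.invertible
  -- block decomposition
  have hsub : S.submatrix (auxSplitEquiv i j hij) (auxSplitEquiv i j hij)
      = Matrix.fromBlocks SII SIJ SIJᵀ SJJ := by
    ext a b
    rcases a with a | a <;> rcases b with b | b
    · rfl
    · rfl
    · exact Matrix.IsSymm.apply hSsymm (e b) a.val
    · rfl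
  haveI hFinv : Invertible (Matrix.fromBlocks SII SIJ SIJᵀ SJJ) := by
    rw [← hsub]; exact Matrix.submatrixEquivInvertible S _ _
  haveI hSchurInv : Invertible (SII - SIJ * ⅟SJJ * SIJᵀ) :=
    Matrix.invertibleOfFromBlocks₂₂Invertible SII SIJ SIJᵀ SJJ
  have hblock := Matrix.invOf_fromBlocks₂₂_eq SII SIJ SIJᵀ SJJ
  have hFinvS : ⅟(Matrix.fromBlocks SII SIJ SIJᵀ SJJ)
      = S⁻¹.submatrix (auxSplitEquiv i j hij) (auxSplitEquiv i j hij) := by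
    rw [Matrix.invOf_eq_nonsing_inv, ← hsub, Matrix.inv_submatrix_equiv]
  have hPII : ∀ a b : Fin 2, (⅟(SII - SIJ * ⅟SJJ * SIJᵀ)) a b = S⁻¹ (e a) (e b) := by
    intro a b
    have h := congrFun (congrFun (hblock.symm.trans hFinvS) (Sum.inl a)) (Sum.inl b)
    simpa [Matrix.fromBlocks, auxSplitEquiv] using h
  have h01 : (⅟(SII - SIJ * ⅟SJJ * SIJᵀ)) 0 1 = 0 := by
    rw [hPII 0 1]
    show S⁻¹ i j = 0
    exact h2
  have hfinal : (SII - SIJ * ⅟SJJ * SIJᵀ) 0 1 = 0 := by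
    conv_lhs => rw [← auxInvOf_inv (SII - SIJ * ⅟SJJ * SIJᵀ)]
    rw [Matrix.inv_def, Matrix.smul_apply, Matrix.adjugate_fin_two]
    simp [h01]
  refine ⟨h1, h2, ?_⟩
  rw [← Matrix.invOf_eq_nonsing_inv SJJ]
  exact hfinal
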